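/- Let X be a finite discrete space with at least two elements, Γ a nonempty set, and φ : Γ → Γ. The following are equivalent: (1) (X^Γ, σ_φ) has the weak specification property; (2) (X^Γ, σ_φ) has the almost weak specification property; (3) φ has no periodic point. -/

import Mathlib

open Filter

/-- The generalized shift `σ_φ` on `X^Γ`. -/
def genShift {X Γ : Type*} (φ : Γ → Γ) (x : Γ → X) : Γ → X := fun γ => x (φ γ)

/-- The basic entourage `α_H` of agreement on `H ⊆ Γ`. -/
def agreeEnt (X : Type*) {Γ : Type*} (H : Set Γ) : Set ((Γ → X) × (Γ → X)) :=
  {p | ∀ γ ∈ H, p.1 γ = p.2 γ}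

/-- Membership in the unique compatible uniform structure `𝒰` on `X^Γ`:
`D` contains some `α_H` with `H ⊆ Γ` finite. -/
def IsProdEntourage (X : Type*) {Γ : Type*} (D : Set ((Γ → X) × (Γ → X))) : Prop :=
  ∃ H : Set Γ, H.Finite ∧ agreeEnt X H ⊆ D

/-- Almost weak specification property for `(X^Γ, σ_φ)`. -/
def AlmostWeakSpec {X Γ : Type*} (φ : Γ → Γ) : Prop :=
  ∀ D : Set ((Γ → X) × (Γ → X)), IsProdEntourage X D →
    ∃ N : ℕ → ℕ, Tendsto (fun n : ℕ => (N n : ℝ) / (n : ℝ)) atTop (nhds 0) ∧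
      ∀ n : ℕ, 2 ≤ n → ∀ y : ℕ → Γ → X, ∀ l k : ℕ → ℕ,
        (∀ j, j < n → l j ≤ k j) →
        (∀ j, j + 1 < n → k j < l (j + 1) ∧ N (k (j + 1) - l (j + 1)) ≤ l (j + 1) - k j) →
        ∃ x : Γ → X, ∀ j, j < n → ∀ i, l j ≤ i → i ≤ k j →
          ((genShift φ)^[i] x, (genShift φ)^[i] (y j)) ∈ D

/-- Weak specification property for `(X^Γ, σ_φ)`: the gap function is constant. -/
def WeakSpec {X Γ : Type*} (φ : Γ → Γ) : Prop :=
  ∀ D : Set ((Γ → X) × (Γ → X)), IsProdEntourage X D →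
    ∃ N : ℕ,
      ∀ n : ℕ, 2 ≤ n → ∀ y : ℕ → Γ → X, ∀ l k : ℕ → ℕ,
        (∀ j, j < n → l j ≤ k j) →
        (∀ j, j + 1 < n → k j < l (j + 1) ∧ N ≤ l (j + 1) - k j) →
        ∃ x : Γ → X, ∀ j, j < n → ∀ i, l j ≤ i → i ≤ k j →
          ((genShift φ)^[i] x, (genShift φ)^[i] (y j)) ∈ D

/-- Specification property for `(X^Γ, σ_φ)`: weak specification where the tracing
point can be chosen periodic for `σ_φ`. -/
def Spec {X Γ : Type*} (φ : Γ → Γ) : Prop :=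
  ∀ D : Set ((Γ → X) × (Γ → X)), IsProdEntourage X D →
    ∃ N : ℕ,
      ∀ n : ℕ, 2 ≤ n → ∀ y : ℕ → Γ → X, ∀ l k : ℕ → ℕ,
        (∀ j, j < n → l j ≤ k j) →
        (∀ j, j + 1 < n → k j < l (j + 1) ∧ N ≤ l (j + 1) - k j) →
        ∃ x : Γ → X, (∃ m : ℕ, 1 ≤ m ∧ (genShift φ)^[m] x = x) ∧
          ∀ j, j < n → ∀ i, l j ≤ i → i ≤ k j →
            ((genShift φ)^[i] x, (genShift φ)^[i] (y j)) ∈ D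

/-- equivalence of weak specification, almost weak specification,
and absence of periodic points of `φ`. -/
lemma genShift_iter {X Γ : Type*} (φ : Γ → Γ) (x : Γ → X) (i : ℕ) (γ : Γ) :
    (genShift φ)^[i] x γ = x (φ^[i] γ) := by
  induction i generalizing x with
  | zero => rfl
  | succ i ih =>
      rw [Function.iterate_succ_apply, ih, Function.iterate_succ_apply']
      rfl

lemma collision_unique {Γ : Type*} (φ : Γ → Γ)
    (hper : ¬ ∃ lam : Γ, ∃ m : ℕ, 1 ≤ m ∧ φ^[m] lam = lam)
    (γ γ' : Γ) (d e a b : ℕ) (hde : d < e)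
    (h1 : φ^[a] γ = φ^[a + d] γ') (h2 : φ^[b] γ = φ^[b + e] γ') : False := by
  apply hper
  refine ⟨φ^[a + b + d] γ', e - d, by omega, ?_⟩
  have H1 : φ^[b + a] γ = φ^[b + (a + d)] γ' := by
    rw [Function.iterate_add_apply, h1, ← Function.iterate_add_apply]
  have H2 : φ^[a + b] γ = φ^[a + (b + e)] γ' := by
    rw [Function.iterate_add_apply, h2, ← Function.iterate_add_apply]
  have heq : φ^[a + b + d] γ' = φ^[a + b + e] γ' := by
    rw [show a + b + d = b + (a + d) by omega, show a + b + e = a + (b + e) by omega,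
      ← H1, ← H2, Nat.add_comm]
  calc φ^[e - d] (φ^[a + b + d] γ') = φ^[(e - d) + (a + b + d)] γ' :=
        (Function.iterate_add_apply φ _ _ γ').symm
    _ = φ^[a + b + e] γ' := by rw [show (e - d) + (a + b + d) = a + b + e by omega]
    _ = φ^[a + b + d] γ' := heq.symm

lemma noPer_weakSpec {X Γ : Type*} [Nonempty X] (φ : Γ → Γ)
    (hper : ¬ ∃ lam : Γ, ∃ m : ℕ, 1 ≤ m ∧ φ^[m] lam = lam) : WeakSpec (X := X) φ := by
  classical
  intro D hD
  obtain ⟨H, hHfin, hHD⟩ := hD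
  set S : Set ℕ := ⋃ γ ∈ H, ⋃ γ' ∈ H, {d : ℕ | ∃ a, φ^[a] γ = φ^[a + d] γ'}
  have hSfin : S.Finite := by
    refine Set.Finite.biUnion hHfin fun γ _ => Set.Finite.biUnion hHfin fun γ' _ => ?_
    refine Set.Subsingleton.finite ?_
    intro d hd e he
    by_contra hne
    rcases Nat.lt_or_ge d e with h | h
    · exact collision_unique φ hper γ γ' d e _ _ h hd.choose_spec he.choose_spec
    · exact collision_unique φ hper γ γ' e d _ _ (by omega) he.choose_spec hd.choose_spec
  obtain ⟨N0, hN0⟩ := hSfin.bddAbove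
  set N := N0 + 1 with hN
  have hdis : ∀ γ ∈ H, ∀ γ' ∈ H, ∀ a d, N ≤ d → φ^[a] γ ≠ φ^[a + d] γ' := by
    intro γ hγ γ' hγ' a d hNd heq
    have : d ∈ S := Set.mem_biUnion hγ (Set.mem_biUnion hγ' ⟨a, heq⟩)
    have := hN0 this
    omega
  refine ⟨N, ?_⟩
  intro n hn y l k hlk hgap
  have hchain : ∀ j', j' < n → ∀ j, j < j' → k j + N ≤ l j' := by
    intro j'
    induction j' with
    | zero => omega
    | succ j' ih =>
        intro hj'n j hj
        rcases Nat.lt_or_ge j j' with h | h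
        · have h1 := ih (by omega) j h
          have h2 := hlk j' (by omega)
          have h3 := (hgap j' hj'n).1
          have h4 := (hgap j' hj'n).2
          omega
        · have hjj : j = j' := by omega
          subst hjj
          have h3 := (hgap j hj'n).1
          have h4 := (hgap j hj'n).2
          omega
  set P : ℕ → Γ → Prop := fun j δ => ∃ γ ∈ H, ∃ i, l j ≤ i ∧ i ≤ k j ∧ φ^[i] γ = δ with hP
  set x : Γ → X := fun δ =>
    if h : ∃ j, j < n ∧ P j δ then y h.choose δ else Classical.arbitrary X with hx
  have hkey : ∀ j, j < n → ∀ δ, P j δ → x δ = y j δ := by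
    intro j hj δ hPj
    have hex : ∃ j, j < n ∧ P j δ := ⟨j, hj, hPj⟩
    have hxδ : x δ = y hex.choose δ := by
      rw [hx]; exact dif_pos hex
    have hspec := hex.choose_spec
    obtain ⟨γ, hγ, i, hli, hik, hiδ⟩ := hPj
    obtain ⟨γ', hγ', i', hli', hik', hiδ'⟩ := hspec.2
    have hjj : hex.choose = j := by
      by_contra hne
      rcases Nat.lt_or_ge hex.choose j with h | h
      · have hc := hchain j hj hex.choose h
        have : φ^[i'] γ' = φ^[i' + (i - i')] γ := by
          rw [show i' + (i - i') = i by omega, hiδ, hiδ']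
        exact hdis γ' hγ' γ hγ i' (i - i') (by omega) this
      · have hlt : j < hex.choose := by omega
        have hc := hchain hex.choose hspec.1 j hlt
        have : φ^[i] γ = φ^[i + (i' - i)] γ' := by
          rw [show i + (i' - i) = i' by omega, hiδ, hiδ']
        exact hdis γ hγ γ' hγ' i (i' - i) (by omega) this
    rw [hxδ, hjj]
  refine ⟨x, ?_⟩
  intro j hj i hli hik
  apply hHD
  intro γ hγ
  show (genShift φ)^[i] x γ = (genShift φ)^[i] (y j) γ
  rw [genShift_iter, genShift_iter]
  exact hkey j hj (φ^[i] γ) ⟨γ, hγ, i, hli, hik, rfl⟩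

lemma weak_almost {X Γ : Type*} (φ : Γ → Γ) (h : WeakSpec (X := X) φ) :
    AlmostWeakSpec (X := X) φ := by
  intro D hD
  obtain ⟨N0, hN0⟩ := h D hD
  exact ⟨fun _ => N0, tendsto_const_div_atTop_nhds_zero_nat (N0 : ℝ),
    fun n hn y l k h1 h2 => hN0 n hn y l k h1 h2⟩

lemma almost_noPer {X Γ : Type*} [Nontrivial X] (φ : Γ → Γ)
    (h : AlmostWeakSpec (X := X) φ) :
    ¬ ∃ lam : Γ, ∃ m : ℕ, 1 ≤ m ∧ φ^[m] lam = lam := by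
  rintro ⟨lam, m, hm, hlam⟩
  obtain ⟨a, b, hab⟩ := exists_pair_ne X
  obtain ⟨N, -, hspec⟩ := h (agreeEnt X {lam}) ⟨{lam}, Set.finite_singleton _, subset_rfl⟩
  set l1 := m + N (m - 1) with hl1
  obtain ⟨x, hx⟩ := hspec 2 le_rfl
    (fun j => if j = 0 then (fun _ => a) else (fun _ => b))
    (fun j => if j = 0 then 0 else l1)
    (fun j => if j = 0 then m - 1 else l1 + (m - 1))
    (by intro j hj; interval_cases j <;> simp)
    (by
      intro j hj
      have hj0 : j = 0 := by omega
      subst hj0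
      simp only [zero_add, reduceIte, if_neg (Nat.one_ne_zero)]
      rw [show l1 + (m - 1) - l1 = m - 1 by omega]
      omega)
  have h0 : x lam = a := by
    have := hx 0 (by omega) 0 (by simp) (by simp)
    have h2 : (genShift φ)^[0] x lam = (genShift φ)^[0] (fun _ => a) lam := this lam rfl
    simpa using h2
  set t := l1 + (m - 1) with ht
  set i := m * (t / m) with hi
  have hdm := Nat.div_add_mod t m
  have hmod : t % m < m := Nat.mod_lt t (by omega)
  have hli : l1 ≤ i := by omega
  have hik : i ≤ t := by omega
  have hfix : φ^[i] lam = lam := by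
    rw [hi, Function.iterate_mul]
    exact Function.iterate_fixed hlam _
  have h1 : x lam = b := by
    have := hx 1 (by omega) i (by simpa using hli) (by simpa using hik)
    have h2 : (genShift φ)^[i] x lam = (genShift φ)^[i] (fun _ => b) lam := this lam rfl
    rw [genShift_iter, genShift_iter, hfix] at h2
    simpa using h2
  exact hab (h0 ▸ h1)

theorem stmt_6 {X Γ : Type*} [Fintype X] [Nontrivial X] [Nonempty Γ] (φ : Γ → Γ) :
    (WeakSpec (X := X) φ ↔ AlmostWeakSpec (X := X) φ) ∧
    (AlmostWeakSpec (X := X) φ ↔ ¬ ∃ lam : Γ, ∃ m : ℕ, 1 ≤ m ∧ φ^[m] lam = lam) := by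
  constructor
  · constructor
    · exact weak_almost φ
    · intro h
      exact noPer_weakSpec φ (almost_noPer φ h)
  · constructor
    · exact almost_noPer φ
    · intro h
      exact weak_almost φ (noPer_weakSpec φ h)
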